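/- Let p_s, p_t be source and target distributions with discrete label y(x), and suppose the label-conditioned feature distributions p_s(f(x)|y), p_t(f(x)|y) have disjoint supports across distinct labels y. Define w_x(x)_0 = p_s(f(x)) / (p_s(f(x)) + p_t(f(x))) and w₁(x)_0 = p_s(y(x)) / (p_s(y(x)) + p_t(y(x))). Then the orthogonalized discriminator satisfies (w_x ∖ w₁)(x)_0 = p_s(f(x)|y(x)) / (p_s(f(x)|y(x)) + p_t(f(x)|y(x))). -/

import Mathlib

/-- the orthogonalized domain discriminator.
At a fixed point `x` with label `y₀ = y(x)`: `psf y = p_s(f(x)|y)` and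
`ptf y = p_t(f(x)|y)` are the label-conditioned feature densities, and
`psy, pty` the label priors in the two domains.  Disjoint supports across
labels mean `psf y = 0` and `ptf y = 0` for `y ≠ y₀`.  With (uniform domain
prior)
`wx₀ = p_s(f(x)) / (p_s(f(x)) + p_t(f(x)))`, where
`p_s(f(x)) = Σ_y psf y * psy y` (similarly for `p_t`), and
`w₁₀ = p_s(y(x)) / (p_s(y(x)) + p_t(y(x)))`, the orthogonalized discriminator
`(w_x∖w₁)(x)_0 = (wx₀/w₁₀) / (wx₀/w₁₀ + (1−wx₀)/(1−w₁₀))` equals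
`p_s(f(x)|y(x)) / (p_s(f(x)|y(x)) + p_t(f(x)|y(x)))`. -/
theorem orthogonalized_discriminator {𝒴 : Type*} [Fintype 𝒴]
    (psf ptf psy pty : 𝒴 → ℝ) (y₀ : 𝒴)
    (hpsf : 0 < psf y₀) (hptf : 0 < ptf y₀)
    (hpsy : ∀ y, 0 < psy y) (hpty : ∀ y, 0 < pty y)
    (hdisjs : ∀ y, y ≠ y₀ → psf y = 0)
    (hdisjt : ∀ y, y ≠ y₀ → ptf y = 0)
    (psfx ptfx wx₀ w₁₀ : ℝ)
    (hpsfx : psfx = ∑ y, psf y * psy y)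
    (hptfx : ptfx = ∑ y, ptf y * pty y)
    (hwx : wx₀ = psfx / (psfx + ptfx))
    (hw₁ : w₁₀ = psy y₀ / (psy y₀ + pty y₀)) :
    (wx₀ / w₁₀) / (wx₀ / w₁₀ + (1 - wx₀) / (1 - w₁₀)) =
      psf y₀ / (psf y₀ + ptf y₀) := by
  have hs : psfx = psf y₀ * psy y₀ := by
    rw [hpsfx, Finset.sum_eq_single y₀]
    · intro y _ hy; rw [hdisjs y hy, zero_mul]
    · intro h; exact absurd (Finset.mem_univ y₀) h
  have ht : ptfx = ptf y₀ * pty y₀ := by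
    rw [hptfx, Finset.sum_eq_single y₀]
    · intro y _ hy; rw [hdisjt y hy, zero_mul]
    · intro h; exact absurd (Finset.mem_univ y₀) h
  have hA : 0 < psf y₀ * psy y₀ := mul_pos hpsf (hpsy y₀)
  have hB : 0 < ptf y₀ * pty y₀ := mul_pos hptf (hpty y₀)
  have hAB : 0 < psfx + ptfx := by rw [hs, ht]; positivity
  have hyy : 0 < psy y₀ + pty y₀ := by have := hpsy y₀; have := hpty y₀; linarith
  have h1w : 1 - w₁₀ = pty y₀ / (psy y₀ + pty y₀) := by
    rw [hw₁]; field_simp; ring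
  have h1x : 1 - wx₀ = ptfx / (psfx + ptfx) := by
    rw [hwx]; field_simp; ring
  rw [h1x, h1w, hwx, hw₁, hs, ht]
  have hD : psf y₀ * psy y₀ + ptf y₀ * pty y₀ ≠ 0 := by positivity
  have hY : psy y₀ + pty y₀ ≠ 0 := hyy.ne'
  have e1 : psf y₀ * psy y₀ / (psf y₀ * psy y₀ + ptf y₀ * pty y₀) /
      (psy y₀ / (psy y₀ + pty y₀)) =
      psf y₀ * (psy y₀ + pty y₀) / (psf y₀ * psy y₀ + ptf y₀ * pty y₀) := by
    rw [div_div_div_eq, div_eq_div_iff (mul_ne_zero hD (hpsy y₀).ne') hD]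
    ring
  have e2 : ptf y₀ * pty y₀ / (psf y₀ * psy y₀ + ptf y₀ * pty y₀) /
      (pty y₀ / (psy y₀ + pty y₀)) =
      ptf y₀ * (psy y₀ + pty y₀) / (psf y₀ * psy y₀ + ptf y₀ * pty y₀) := by
    rw [div_div_div_eq, div_eq_div_iff (mul_ne_zero hD (hpty y₀).ne') hD]
    ring
  rw [e1, e2, ← add_div]
  have hsum : psf y₀ * (psy y₀ + pty y₀) + ptf y₀ * (psy y₀ + pty y₀) ≠ 0 :=
    (add_pos (mul_pos hpsf hyy) (mul_pos hptf hyy)).ne'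
  have hab : psf y₀ + ptf y₀ ≠ 0 := (add_pos hpsf hptf).ne'
  rw [div_div_div_eq, div_eq_div_iff (mul_ne_zero hD hsum) hab]
  ring
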